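/- arXiv:2401.07317 — 3 statements merged into one kernel-verified Lean document; each statement's English description precedes it below -/
import Mathlib

section
/- Let x, y, z ∈ ℝⁿ and suppose the triple [x,y,z] is F-right-angled in z. Then: (1) for every natural number p, letting d_{φ_p}(u,v) := (Σ_{i∈[n]} (u_i^{2p+1} − v_i^{2p+1})²)^{1/(2(2p+1))}, one has d_{φ_p}(x,y)² = ( (d_{φ_p}(x,z)²)^{2p+1} + (d_{φ_p}(y,z)²)^{2p+1} )^{1/(2p+1)}; and (2) d_⊞(x,y) = max{d_⊞(x,z), d_⊞(y,z)}. -/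
open Filter Finset

/-- The binary idempotent operation `⊞`. -/
noncomputable def bop (a b : ℝ) : ℝ :=
  if |b| < |a| then a else if |a| < |b| then b else (a + b) / 2

/-- The unique real `(2p+1)`-th root of `t`. -/
noncomputable def oddRoot (p : ℕ) (t : ℝ) : ℝ :=
  Real.sign t * |t| ^ ((1 : ℝ) / (2 * (p : ℝ) + 1))

/-- `ξ_I[u](α) = Card{i ∈ I : u i = α} − Card{i ∈ I : u i = −α}`. -/
noncomputable def xiMap {ι : Type*} (I : Finset ι) (u : ι → ℝ) (α : ℝ) : ℤ :=
  ((I.filter fun i => u i = α).card : ℤ) - ((I.filter fun i => u i = -α).card : ℤ)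

/-- The residual index set `J_I(u)`. -/
noncomputable def resid {ι : Type*} (I : Finset ι) (u : ι → ℝ) : Finset ι :=
  I.filter fun i => xiMap I u (u i) ≠ 0

/-- The `n`-ary extension `⊞_{i ∈ I} u i` of the binary operation `⊞`. -/
noncomputable def Fop {ι : Type*} (I : Finset ι) (u : ι → ℝ) : ℝ :=
  if h : (resid I u).Nonempty then
    if 0 < xiMap I u ((resid I u).sup' h fun i => |u i|) then (resid I u).sup' h u
    else if xiMap I u ((resid I u).sup' h fun i => |u i|) < 0 then (resid I u).inf' h u
    else 0
  else 0

/-- The Chebyshev norm `max_{i ∈ [n]} |x i|`. -/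
noncomputable def chebNorm {n : ℕ} (x : Fin n → ℝ) : ℝ := ⨆ i, |x i|

/-- The ultrametric distance `d_⊞(x,y) = max_i |x_i ⊟ y_i|`. -/
noncomputable def dB {n : ℕ} (x y : Fin n → ℝ) : ℝ := ⨆ i, |bop (x i) (-(y i))|

/-- The 4n-ary value `⟨⟨x,y,z⟩⟩_∞` used for F-right angles. -/
noncomputable def rightAngleVal {n : ℕ} (x y z : Fin n → ℝ) : ℝ :=
  Fop (Finset.univ : Finset ((Fin n ⊕ Fin n) ⊕ (Fin n ⊕ Fin n)))
    (Sum.elim (Sum.elim (fun i => x i * y i) (fun i => -(x i * z i)))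
              (Sum.elim (fun i => -(y i * z i)) (fun i => z i ^ 2)))

/-- The generalized distance `d_{φ_p}`. -/
noncomputable def dphi (p : ℕ) {n : ℕ} (u v : Fin n → ℝ) : ℝ :=
  (∑ i, (u i ^ (2 * p + 1) - v i ^ (2 * p + 1)) ^ 2)
    ^ ((1 : ℝ) / (2 * (2 * (p : ℝ) + 1)))

private lemma abs_bop_neg (a b : ℝ) :
    |bop a (-b)| = if a = b then 0 else max |a| |b| := by
  unfold bop
  rw [abs_neg]
  rcases lt_trichotomy |b| |a| with hlt | heq | hgt
  · have hne : a ≠ b := fun e => by rw [e] at hlt; exact lt_irrefl _ hlt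
    rw [if_pos hlt, if_neg hne, max_eq_left hlt.le]
  · rw [if_neg (heq ▸ lt_irrefl _), if_neg (heq ▸ lt_irrefl _)]
    rcases abs_eq_abs.mp heq with rfl | rfl
    · rw [if_pos rfl]
      simp
    · rcases eq_or_ne a (-a) with h0 | h0
      · have : a = 0 := by linarith [h0]
        subst this; simp
      · rw [if_neg h0]
        rw [abs_neg, max_self]
        rw [neg_neg]
        rw [show (a + a)/2 = a by ring]
  · have hne : a ≠ b := fun e => by rw [e] at hgt; exact lt_irrefl _ hgt
    rw [if_neg (not_lt.mpr hgt.le), if_pos hgt, if_neg hne, abs_neg, max_eq_right hgt.le]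

private lemma abs_bop_comm (a b : ℝ) : |bop a (-b)| = |bop b (-a)| := by
  rw [abs_bop_neg, abs_bop_neg, max_comm]
  rcases eq_or_ne a b with rfl | h
  · simp
  · rw [if_neg h, if_neg (Ne.symm h)]

private lemma bop_ultra (a b c : ℝ) :
    |bop a (-b)| ≤ max |bop a (-c)| |bop b (-c)| := by
  rw [abs_bop_neg, abs_bop_neg, abs_bop_neg]
  rcases eq_or_ne a b with rfl | hab
  · rw [if_pos rfl]
    have h1 : (0:ℝ) ≤ if a = c then 0 else max |a| |c| := by positivity
    exact le_trans h1 (le_max_left _ _)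
  · rw [if_neg hab]
    rcases eq_or_ne a c with rfl | hac
    · rw [if_pos rfl, if_neg (Ne.symm hab)]
      exact le_trans (le_of_eq (max_comm _ _)) (le_max_right _ _)
    · rw [if_neg hac]
      rcases eq_or_ne b c with rfl | hbc
      · exact le_max_left _ _
      · rw [if_neg hbc]
        exact max_le_max (le_max_left _ _) (le_max_left _ _)

private lemma pow_sub_le_bop (a b : ℝ) (p : ℕ) :
    |a ^ (2*p+1) - b ^ (2*p+1)| ≤ 2 * |bop a (-b)| ^ (2*p+1) := by
  rw [abs_bop_neg]
  rcases eq_or_ne a b with rfl | hab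
  · simp [zero_pow (by omega : 2*p+1 ≠ 0)]
  · rw [if_neg hab]
    calc |a^(2*p+1) - b^(2*p+1)| ≤ |a^(2*p+1)| + |b^(2*p+1)| := abs_sub _ _
      _ = |a|^(2*p+1) + |b|^(2*p+1) := by rw [abs_pow, abs_pow]
      _ ≤ max |a| |b| ^ (2*p+1) + max |a| |b| ^ (2*p+1) :=
          add_le_add (pow_le_pow_left₀ (abs_nonneg _) (le_max_left _ _) _)
            (pow_le_pow_left₀ (abs_nonneg _) (le_max_right _ _) _)
      _ = 2 * max |a| |b| ^ (2*p+1) := by ring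

private lemma exists_lower_bop (a b : ℝ) (h : 0 < |bop a (-b)|) :
    ∃ c : ℝ, 0 ≤ c ∧ c < |bop a (-b)| ∧
      ∀ p : ℕ, |bop a (-b)| ^ (2*p+1) - c ^ (2*p+1) ≤ |a ^ (2*p+1) - b ^ (2*p+1)| := by
  rcases eq_or_ne a b with rfl | hab
  · rw [abs_bop_neg, if_pos rfl] at h; exact absurd h (lt_irrefl 0)
  rw [abs_bop_neg, if_neg hab] at h ⊢
  rcases lt_trichotomy |a| |b| with hlt | heq | hgt
  · refine ⟨|a|, abs_nonneg _, by rwa [max_eq_right hlt.le], fun p => ?_⟩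
    rw [max_eq_right hlt.le]
    calc |b|^(2*p+1) - |a|^(2*p+1) = |b^(2*p+1)| - |a^(2*p+1)| := by rw [abs_pow, abs_pow]
      _ ≤ |b^(2*p+1) - a^(2*p+1)| := abs_sub_abs_le_abs_sub _ _
      _ = |a^(2*p+1) - b^(2*p+1)| := abs_sub_comm _ _
  · have hba : a = -b := by
      rcases abs_eq_abs.mp heq with h' | h'
      · exact absurd h' hab
      · exact h'
    subst hba
    refine ⟨0, le_refl _, h, fun p => ?_⟩
    have hodd : Odd (2*p+1) := odd_two_mul_add_one p
    rw [hodd.neg_pow, zero_pow (by omega : 2*p+1 ≠ 0), sub_zero]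
    rw [abs_neg, max_self, show -b^(2*p+1) - b^(2*p+1) = -(2*b^(2*p+1)) by ring, abs_neg,
      abs_mul, abs_pow]
    norm_num
    nlinarith [pow_nonneg (abs_nonneg b) (2*p+1)]
  · refine ⟨|b|, abs_nonneg _, by rwa [max_eq_left hgt.le], fun p => ?_⟩
    rw [max_eq_left hgt.le]
    calc |a|^(2*p+1) - |b|^(2*p+1) = |a^(2*p+1)| - |b^(2*p+1)| := by rw [abs_pow, abs_pow]
      _ ≤ |a^(2*p+1) - b^(2*p+1)| := abs_sub_abs_le_abs_sub _ _

private lemma xiMap_neg' {ι : Type*} (I : Finset ι) (u : ι → ℝ) (α : ℝ) :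
    xiMap I u (-α) = - xiMap I u α := by
  unfold xiMap
  simp only [neg_neg]
  ring

private lemma xiMap_zero' {ι : Type*} (I : Finset ι) (u : ι → ℝ) :
    xiMap I u 0 = 0 := by
  unfold xiMap
  simp only [neg_zero, sub_self]

private lemma exists_of_xi_pos {ι : Type*} {I : Finset ι} {u : ι → ℝ} {α : ℝ}
    (h : 0 < xiMap I u α) : ∃ j ∈ I, u j = α := by
  unfold xiMap at h
  have hcard : 0 < (I.filter fun i => u i = α).card := by omega
  obtain ⟨j, hj⟩ := Finset.card_pos.mp hcard
  exact ⟨j, (Finset.mem_filter.mp hj).1, (Finset.mem_filter.mp hj).2⟩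

private lemma resid_xi_zero_of_Fop_eq_zero {ι : Type*} (I : Finset ι) (u : ι → ℝ)
    (h : Fop I u = 0) : ∀ i ∈ I, xiMap I u (u i) = 0 := by
  by_contra hc
  push_neg at hc
  obtain ⟨i0, hi0, hxi0⟩ := hc
  have hne : (resid I u).Nonempty := ⟨i0, Finset.mem_filter.mpr ⟨hi0, hxi0⟩⟩
  unfold Fop at h
  rw [dif_pos hne] at h
  obtain ⟨k, hk, hkM⟩ := Finset.exists_mem_eq_sup' hne fun i => |u i|
  set M := (resid I u).sup' hne fun i => |u i| with hMdef
  have hk' : xiMap I u (u k) ≠ 0 := (Finset.mem_filter.mp hk).2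
  have hMpos : 0 < M := by
    rcases (abs_nonneg (u k)).lt_or_eq with hpos | h0
    · rw [hkM]; exact hpos
    · exfalso
      apply hk'
      rw [abs_eq_zero.mp h0.symm, xiMap_zero']
  have hsigns : u k = M ∨ u k = -M := by
    rcases abs_eq_abs.mp (show |u k| = |M| by rw [← hkM, abs_of_pos hMpos]) with h' | h'
    · exact Or.inl h'
    · exact Or.inr h'
  have hxiM : xiMap I u M ≠ 0 := by
    intro h0
    apply hk'
    rcases hsigns with h' | h'
    · rw [h', h0]
    · rw [h', xiMap_neg', h0, neg_zero]
  rcases lt_trichotomy (xiMap I u M) 0 with hneg | h0 | hpos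
  · rw [if_neg (by omega), if_pos hneg] at h
    have hx : 0 < xiMap I u (-M) := by rw [xiMap_neg']; omega
    obtain ⟨j, hj, hju⟩ := exists_of_xi_pos hx
    have hjres : j ∈ resid I u := by
      refine Finset.mem_filter.mpr ⟨hj, ?_⟩
      rw [hju, xiMap_neg']
      omega
    have := Finset.inf'_le u hjres
    rw [h, hju] at this
    linarith
  · exact hxiM h0
  · rw [if_pos hpos] at h
    obtain ⟨j, hj, hju⟩ := exists_of_xi_pos hpos
    have hjres : j ∈ resid I u := by
      refine Finset.mem_filter.mpr ⟨hj, ?_⟩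
      rw [hju]
      omega
    have := Finset.le_sup' (f := u) hjres
    rw [h, hju] at this
    linarith

private lemma sum_odd_eq_zero {ι : Type*} (I : Finset ι) (u : ι → ℝ)
    (hxi : ∀ i ∈ I, xiMap I u (u i) = 0) (f : ℝ → ℝ) (hf : ∀ t, f (-t) = - f t) :
    ∑ i ∈ I, f (u i) = 0 := by
  classical
  have hcard : ∀ α, α ∈ I.image u →
      (I.filter fun i => u i = -α).card = (I.filter fun i => u i = α).card := by
    intro α hα
    obtain ⟨i, hi, rfl⟩ := Finset.mem_image.mp hα
    have h2 := hxi i hi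
    unfold xiMap at h2
    omega
  rw [Finset.sum_comp f u]
  have hf0 : f 0 = 0 := by
    have := hf 0
    rw [neg_zero] at this
    linarith
  refine Finset.sum_involution (fun α _ => -α) ?_ ?_ ?_ ?_
  · intro α hα
    rw [Finset.filter_congr_decidable, Finset.filter_congr_decidable] at *
    rw [hcard α hα, hf, smul_neg, add_neg_cancel]
  · intro α hα hne heq
    apply hne
    have hα0 : α = 0 := by linarith
    rw [hα0, hf0, smul_zero]
  · intro α hα
    obtain ⟨i, hi, rfl⟩ := Finset.mem_image.mp hα
    have h1 : 0 < (I.filter fun j => u j = u i).card :=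
      Finset.card_pos.mpr ⟨i, Finset.mem_filter.mpr ⟨hi, rfl⟩⟩
    have h2 : 0 < (I.filter fun j => u j = -(u i)).card := by
      rw [hcard _ hα]; exact h1
    obtain ⟨j, hj⟩ := Finset.card_pos.mp h2
    exact Finset.mem_image.mpr ⟨j, (Finset.mem_filter.mp hj).1, (Finset.mem_filter.mp hj).2⟩
  · intro α hα
    simp only [neg_neg]


set_option maxHeartbeats 1000000

/-- the idempotent Pythagorean theorem. -/
theorem stmt14 (n : ℕ) (x y z : Fin n → ℝ) (h : rightAngleVal x y z = 0) :
    (∀ p : ℕ, dphi p x y ^ 2 =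
      oddRoot p ((dphi p x z ^ 2) ^ (2 * p + 1) + (dphi p y z ^ 2) ^ (2 * p + 1))) ∧
    dB x y = max (dB x z) (dB y z) := by
  classical
  unfold rightAngleVal at h
  have hxi := resid_xi_zero_of_Fop_eq_zero _ _ h
  have key : ∀ p : ℕ, ∑ i, (x i ^ (2*p+1) - z i ^ (2*p+1)) * (y i ^ (2*p+1) - z i ^ (2*p+1)) = 0 := by
    intro p
    have hodd : Odd (2*p+1) := odd_two_mul_add_one p
    have h0 := sum_odd_eq_zero _ _ hxi (fun t => t ^ (2*p+1)) (fun t => hodd.neg_pow t)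
    simp only [Fintype.sum_sum_type, Sum.elim_inl, Sum.elim_inr] at h0
    have e1 : ∑ i, (x i ^ (2*p+1) - z i ^ (2*p+1)) * (y i ^ (2*p+1) - z i ^ (2*p+1))
        = (∑ i, (x i * y i) ^ (2*p+1) + ∑ i, (-(x i * z i)) ^ (2*p+1))
          + (∑ i, (-(y i * z i)) ^ (2*p+1) + ∑ i, (z i ^ 2) ^ (2*p+1)) := by
      rw [← Finset.sum_add_distrib, ← Finset.sum_add_distrib, ← Finset.sum_add_distrib]
      refine Finset.sum_congr rfl fun i _ => ?_
      rw [hodd.neg_pow, hodd.neg_pow]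
      ring
    rw [e1]
    exact h0
  have hsplit : ∀ p : ℕ, ∑ i, (x i ^ (2*p+1) - y i ^ (2*p+1))^2
      = ∑ i, (x i ^ (2*p+1) - z i ^ (2*p+1))^2 + ∑ i, (y i ^ (2*p+1) - z i ^ (2*p+1))^2 := by
    intro p
    have e1 : ∑ i, (x i ^ (2*p+1) - y i ^ (2*p+1))^2
        + 2 * ∑ i, (x i ^ (2*p+1) - z i ^ (2*p+1)) * (y i ^ (2*p+1) - z i ^ (2*p+1))
        = ∑ i, (x i ^ (2*p+1) - z i ^ (2*p+1))^2 + ∑ i, (y i ^ (2*p+1) - z i ^ (2*p+1))^2 := by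
      rw [Finset.mul_sum, ← Finset.sum_add_distrib, ← Finset.sum_add_distrib]
      exact Finset.sum_congr rfl fun i _ => by ring
    rw [key p, mul_zero, add_zero] at e1
    exact e1
  constructor
  · intro p
    have hE : (0:ℝ) < 2*(p:ℝ)+1 := by positivity
    have hE' : (2*(p:ℝ)+1) ≠ 0 := hE.ne'
    have hS1 : (0:ℝ) ≤ ∑ i, (x i ^ (2*p+1) - y i ^ (2*p+1))^2 :=
      Finset.sum_nonneg fun i _ => sq_nonneg _
    have hS2 : (0:ℝ) ≤ ∑ i, (x i ^ (2*p+1) - z i ^ (2*p+1))^2 :=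
      Finset.sum_nonneg fun i _ => sq_nonneg _
    have hS3 : (0:ℝ) ≤ ∑ i, (y i ^ (2*p+1) - z i ^ (2*p+1))^2 :=
      Finset.sum_nonneg fun i _ => sq_nonneg _
    have hd : ∀ u v : Fin n → ℝ, (0:ℝ) ≤ ∑ i, (u i ^ (2*p+1) - v i ^ (2*p+1))^2 →
        dphi p u v ^ 2
        = (∑ i, (u i ^ (2*p+1) - v i ^ (2*p+1))^2) ^ ((1:ℝ)/(2*(p:ℝ)+1)) := by
      intro u v hS
      unfold dphi
      rw [← Real.rpow_natCast ((∑ i, (u i ^ (2*p+1) - v i ^ (2*p+1))^2)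
            ^ ((1 : ℝ) / (2 * (2 * (p : ℝ) + 1)))) 2,
          ← Real.rpow_mul hS]
      congr 1
      push_cast
      field_simp
    have h2 : ∀ S : ℝ, 0 ≤ S → (S ^ ((1:ℝ)/(2*(p:ℝ)+1))) ^ (2*p+1) = S := by
      intro S hS
      rw [← Real.rpow_natCast (S ^ ((1:ℝ)/(2*(p:ℝ)+1))) (2*p+1), ← Real.rpow_mul hS]
      rw [show (1:ℝ)/(2*(p:ℝ)+1) * ((2*p+1 : ℕ):ℝ) = 1 by push_cast; field_simp]
      exact Real.rpow_one S
    rw [hd x z hS2, hd y z hS3, h2 _ hS2, h2 _ hS3, ← hsplit p, hd x y hS1]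
    unfold oddRoot
    rcases hS1.lt_or_eq with hpos | heq
    · rw [Real.sign_of_pos hpos, abs_of_pos hpos, one_mul]
    · rw [← heq, Real.zero_rpow (one_div_pos.mpr hE).ne', Real.sign_zero, zero_mul]
  · rcases Nat.eq_zero_or_pos n with rfl | hn
    · simp [dB]
    haveI : Nonempty (Fin n) := Fin.pos_iff_nonempty.mp hn
    have hbdd : ∀ f : Fin n → ℝ, BddAbove (Set.range f) := fun f => (Set.finite_range f).bddAbove
    have hdB : ∀ u v : Fin n → ℝ, dB u v = ⨆ i, |bop (u i) (-(v i))| := fun u v => rfl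
    have hle : ∀ u v : Fin n → ℝ, ∀ i, |bop (u i) (-(v i))| ≤ dB u v := by
      intro u v i
      rw [hdB]
      exact le_ciSup (f := fun i => |bop (u i) (-(v i))|) (hbdd _) i
    have hub : ∀ (u v : Fin n → ℝ) (c : ℝ), (∀ i, |bop (u i) (-(v i))| ≤ c) → dB u v ≤ c := by
      intro u v c hc
      rw [hdB]
      exact ciSup_le hc
    have hnn : 0 ≤ dB x y := le_trans (abs_nonneg _) (hle x y ⟨0, hn⟩)
    have t1 : dB x y ≤ max (dB x z) (dB y z) :=
      hub _ _ _ fun i => le_trans (bop_ultra (x i) (y i) (z i))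
        (max_le_max (hle x z i) (hle y z i))
    by_contra hne0
    have hlt0 : dB x y < max (dB x z) (dB y z) := lt_of_le_of_ne t1 hne0
    set M := max (dB x z) (dB y z) with hM
    have hMpos : 0 < M := lt_of_le_of_lt hnn hlt0
    have t3 : dB y z ≤ max (dB x y) (dB x z) := hub _ _ _ fun i =>
      le_trans (bop_ultra (y i) (z i) (x i))
        (max_le_max (le_trans (le_of_eq (abs_bop_comm _ _)) (hle x y i))
          (le_trans (le_of_eq (abs_bop_comm _ _)) (hle x z i)))
    have hxzM : dB x z = M := by
      rcases max_cases (dB x z) (dB y z) with ⟨he, hge⟩ | ⟨he, hge2⟩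
      · rw [hM, he]
      · exfalso
        rw [hM, he] at hlt0
        rcases max_cases (dB x y) (dB x z) with ⟨he2, _⟩ | ⟨he2, _⟩ <;> rw [he2] at t3 <;> linarith
    obtain ⟨j, hj⟩ := exists_eq_ciSup_of_finite (f := fun i => |bop (x i) (-(z i))|)
    have hjM : |bop (x j) (-(z j))| = M := by
      rw [hj, ← hdB x z]
      exact hxzM
    obtain ⟨c, hc0, hcM, hlow⟩ := exists_lower_bop (x j) (z j) (by rw [hjM]; exact hMpos)
    rw [hjM] at hcM hlow
    set s := dB x y / M with hs
    set r := c / M with hr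
    have hs1 : s < 1 := (div_lt_one hMpos).mpr hlt0
    have hs0 : 0 ≤ s := div_nonneg hnn hMpos.le
    have hr1 : r < 1 := (div_lt_one hMpos).mpr hcM
    have hr0 : 0 ≤ r := div_nonneg hc0 hMpos.le
    have hT : Filter.Tendsto (fun p : ℕ => 2*p+1) Filter.atTop Filter.atTop :=
      Filter.tendsto_atTop_atTop_of_monotone (fun a b hab => by omega) (fun b => ⟨b, by omega⟩)
    have hrt : Filter.Tendsto (fun p : ℕ => r ^ (2*p+1)) Filter.atTop (nhds 0) :=
      (tendsto_pow_atTop_nhds_zero_of_lt_one hr0 hr1).comp hT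
    have hst : Filter.Tendsto (fun p : ℕ => 4*(n:ℝ)*(s ^ (2*p+1))^2) Filter.atTop (nhds 0) := by
      have h1 := (tendsto_pow_atTop_nhds_zero_of_lt_one hs0 hs1).comp hT
      have h2 := (h1.mul h1).const_mul (4*(n:ℝ))
      simp only [mul_zero, zero_mul] at h2
      refine h2.congr fun p => ?_
      simp [Function.comp, sq]
    obtain ⟨p, hp1, hp2⟩ := ((hrt.eventually_lt_const (by norm_num : (0:ℝ) < 1/2)).and
      (hst.eventually_lt_const (by norm_num : (0:ℝ) < 1/4))).exists
    set q := 2*p+1 with hqdef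
    have hMq : 0 < M ^ q := pow_pos hMpos q
    have hcq : c ^ q < (1/2) * M ^ q := by
      have hc : c = r * M := by rw [hr]; field_simp
      rw [hc, mul_pow]
      exact mul_lt_mul_of_pos_right hp1 hMq
    have hP : dB x y ^ q = s ^ q * M ^ q := by
      rw [← mul_pow, hs]
      congr 1
      field_simp
    have hup : ∑ i, (x i ^ q - y i ^ q)^2 ≤ (n:ℝ) * (2 * dB x y ^ q)^2 := by
      have hbound : ∀ i ∈ (univ : Finset (Fin n)),
          (x i ^ q - y i ^ q)^2 ≤ (2 * dB x y ^ q)^2 := by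
        intro i _
        have h1 : |x i ^ q - y i ^ q| ≤ 2 * dB x y ^ q := by
          refine le_trans (pow_sub_le_bop (x i) (y i) p) ?_
          have h2 := pow_le_pow_left₀ (abs_nonneg _) (hle x y i) q
          linarith
        calc (x i ^ q - y i ^ q)^2 = |x i ^ q - y i ^ q|^2 := (sq_abs _).symm
          _ ≤ (2 * dB x y ^ q)^2 := pow_le_pow_left₀ (abs_nonneg _) h1 2
      calc ∑ i, (x i ^ q - y i ^ q)^2 ≤ ∑ _i : Fin n, (2 * dB x y ^ q)^2 :=
            Finset.sum_le_sum hbound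
        _ = (n:ℝ) * (2 * dB x y ^ q)^2 := by
            rw [Finset.sum_const, Finset.card_univ, Fintype.card_fin, nsmul_eq_mul]
    have hlowj : (M^q - c^q)^2 ≤ ∑ i, (x i ^ q - y i ^ q)^2 := by
      rw [hsplit p]
      have h3 : 0 ≤ M^q - c^q := by
        have := pow_le_pow_left₀ hc0 hcM.le q
        linarith
      have h1 : (M^q - c^q)^2 ≤ (x j ^ q - z j ^ q)^2 := by
        calc (M^q - c^q)^2 ≤ |x j ^ q - z j ^ q|^2 := pow_le_pow_left₀ h3 (hlow p) 2
          _ = (x j ^ q - z j ^ q)^2 := sq_abs _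
      have h4 : (x j ^ q - z j ^ q)^2 ≤ ∑ i, (x i ^ q - z i ^ q)^2 :=
        Finset.single_le_sum (f := fun i => (x i ^ q - z i ^ q)^2)
          (fun i _ => sq_nonneg _) (Finset.mem_univ j)
      have h5 : (0:ℝ) ≤ ∑ i, (y i ^ q - z i ^ q)^2 := Finset.sum_nonneg fun i _ => sq_nonneg _
      linarith
    have e1 : 0 < M^q - c^q - 1/2*M^q := by linarith
    have e2 : 0 < M^q - c^q + 1/2*M^q := by linarith
    have hA : (1/2*M^q)^2 < (M^q - c^q)^2 := by nlinarith [mul_pos e1 e2]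
    have hB : (n:ℝ) * (2 * dB x y ^ q)^2 < (1/2*M^q)^2 := by
      have h6 := mul_lt_mul_of_pos_right hp2 (pow_pos hMq 2)
      rw [hP]
      nlinarith [h6]
    linarith
end

section
/- For all nonzero x, y ∈ ℝ², max{ |x₁y₁ ⊞ x₂y₂| , |x₁y₂ ⊟ x₂y₁| } = ‖x‖_∞ ‖y‖_∞; equivalently, the limit pseudo-cosine cos_∞(x,y) = (x₁y₁ ⊞ x₂y₂)/(‖x‖_∞‖y‖_∞) and limit pseudo-sine sin_∞(x,y) = (x₁y₂ ⊟ x₂y₁)/(‖x‖_∞‖y‖_∞) satisfy max{|cos_∞(x,y)|, |sin_∞(x,y)|} = 1. -/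
open Filter Finset

lemma bop_comm (a b : ℝ) : bop a b = bop b a := by
  unfold bop
  rcases lt_trichotomy |a| |b| with h | h | h
  · simp [h, not_lt.2 h.le, asymm h]
  · simp [h, add_comm]
  · simp [h, not_lt.2 h.le, asymm h]

lemma bop_neg (a b : ℝ) : bop (-a) (-b) = -(bop a b) := by
  unfold bop
  simp only [abs_neg]
  split_ifs <;> ring

lemma abs_bop_negneg (u v : ℝ) : |bop (-u) (-v)| = |bop u v| := by
  rw [bop_neg, abs_neg]

lemma abs_bop_swap (u v : ℝ) : |bop v (-u)| = |bop u (-v)| := by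
  rw [bop_comm, show bop (-u) v = -(bop u (-v)) from by rw [← bop_neg, neg_neg], abs_neg]

lemma abs_bop_le (a b : ℝ) : |bop a b| ≤ max |a| |b| := by
  unfold bop
  split_ifs with h1 h2
  · exact le_max_left _ _
  · exact le_max_right _ _
  · have h : |a + b| ≤ |a| + |b| := abs_add_le a b
    have := le_max_left |a| |b|
    have := le_max_right |a| |b|
    rw [abs_div, abs_of_nonneg (by norm_num : (0:ℝ) ≤ 2),
      div_le_iff₀ (by norm_num : (0:ℝ) < 2)]
    linarith

lemma abs_bop_eq (a b : ℝ) (h : ¬(|a| = |b| ∧ a = -b)) : |bop a b| = max |a| |b| := by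
  unfold bop
  split_ifs with h1 h2
  · exact (max_eq_left h1.le).symm
  · exact (max_eq_right h2.le).symm
  · have hab : |a| = |b| := le_antisymm (not_lt.1 h1) (not_lt.1 h2)
    have hh : a = b := by
      rcases abs_eq_abs.1 hab with h' | h'
      · exact h'
      · exact absurd ⟨hab, h'⟩ h
    subst hh
    rw [add_self_div_two, max_self]

lemma cheb2 (x : Fin 2 → ℝ) : chebNorm x = max |x 0| |x 1| := by
  unfold chebNorm
  apply le_antisymm
  · apply ciSup_le
    intro i
    fin_cases i
    · exact le_max_left _ _
    · exact le_max_right _ _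
  · apply max_le
    · exact le_ciSup (f := fun i : Fin 2 => |x i|) (Set.Finite.bddAbove (Set.finite_range _)) 0
    · exact le_ciSup (f := fun i : Fin 2 => |x i|) (Set.Finite.bddAbove (Set.finite_range _)) 1

lemma cheb_pos {x : Fin 2 → ℝ} (hx : x ≠ 0) : 0 < max |x 0| |x 1| := by
  by_contra h
  push_neg at h
  have h0 : x 0 = 0 := abs_nonpos_iff.1 (le_trans (le_max_left _ _) h)
  have h1 : x 1 = 0 := abs_nonpos_iff.1 (le_trans (le_max_right _ _) h)
  exact hx (funext fun i => by fin_cases i <;> simp [h0, h1])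

lemma max_div' (p q r : ℝ) (hr : 0 < r) : max (p / r) (q / r) = max p q / r := by
  rcases le_total p q with h | h
  · rw [max_eq_right h, max_eq_right (by gcongr)]
  · rw [max_eq_left h, max_eq_left (by gcongr)]

lemma bop_master (a b c d : ℝ) (hb : |b| ≤ |a|) (hd : |d| ≤ |c|) (ha : a ≠ 0) (hc : c ≠ 0) :
    |a| * |c| ≤ max |bop (a * c) (b * d)| |bop (a * d) (-(b * c))| := by
  have ha0 : 0 < |a| := abs_pos.2 ha
  have hc0 : 0 < |c| := abs_pos.2 hc
  by_cases hdeg : |a * c| = |b * d| ∧ a * c = -(b * d)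
  · obtain ⟨h1, h2⟩ := hdeg
    rw [abs_mul, abs_mul] at h1
    have hab : |a| = |b| :=
      le_antisymm (by nlinarith [mul_le_mul_of_nonneg_left hd (abs_nonneg b)]) hb
    have hcd : |c| = |d| :=
      le_antisymm (by nlinarith [mul_le_mul_of_nonneg_left hb (abs_nonneg d)]) hd
    have hd0 : d ≠ 0 := abs_pos.1 (hcd ▸ hc0)
    have hne : a * d ≠ b * c := by
      intro h
      have key : c * d * (a ^ 2 + b ^ 2) = 0 := by linear_combination a * d * h2 - b * d * h
      have hcd0 : c * d ≠ 0 := mul_ne_zero hc hd0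
      have hp : 0 < a ^ 2 := by positivity
      have hp2 : 0 < a ^ 2 + b ^ 2 := by nlinarith [sq_nonneg b]
      rcases mul_eq_zero.1 key with hk | hk
      · exact hcd0 hk
      · linarith
    have hb2 : |bop (a * d) (-(b * c))| = max |a * d| |-(b * c)| :=
      abs_bop_eq _ _ (fun hh => hne (by have := hh.2; rwa [neg_neg] at this))
    refine le_trans ?_ (le_max_right _ _)
    rw [hb2, abs_neg, abs_mul, abs_mul, hcd]
    exact le_max_left _ _
  · refine le_trans ?_ (le_max_left _ _)
    rw [abs_bop_eq (a * c) (b * d) hdeg, ← abs_mul]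
    exact le_max_left _ _


/-- max of limit pseudo-cosine and pseudo-sine absolute values is 1. -/
theorem stmt15 (x y : Fin 2 → ℝ) (hx : x ≠ 0) (hy : y ≠ 0) :
    max |bop (x 0 * y 0) (x 1 * y 1)| |bop (x 0 * y 1) (-(x 1 * y 0))|
        = chebNorm x * chebNorm y ∧
    max |bop (x 0 * y 0) (x 1 * y 1) / (chebNorm x * chebNorm y)|
        |bop (x 0 * y 1) (-(x 1 * y 0)) / (chebNorm x * chebNorm y)| = 1 := by
  have hMx := cheb2 x
  have hMy := cheb2 y
  have hx0 : 0 < max |x 0| |x 1| := cheb_pos hx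
  have hy0 : 0 < max |y 0| |y 1| := cheb_pos hy
  set a := x 0 with ha'
  set b := x 1 with hb'
  set c := y 0 with hc'
  set d := y 1 with hd'
  have hNpos : 0 < chebNorm x * chebNorm y := by rw [hMx, hMy]; exact mul_pos hx0 hy0
  have main : max |bop (a * c) (b * d)| |bop (a * d) (-(b * c))| = chebNorm x * chebNorm y := by
    rw [hMx, hMy]
    apply le_antisymm
    · apply max_le
      · refine (abs_bop_le _ _).trans (max_le ?_ ?_)
        · rw [abs_mul]
          exact mul_le_mul (le_max_left _ _) (le_max_left _ _) (abs_nonneg _) hx0.le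
        · rw [abs_mul]
          exact mul_le_mul (le_max_right _ _) (le_max_right _ _) (abs_nonneg _) hx0.le
      · refine (abs_bop_le _ _).trans (max_le ?_ ?_)
        · rw [abs_mul]
          exact mul_le_mul (le_max_left _ _) (le_max_right _ _) (abs_nonneg _) hx0.le
        · rw [abs_neg, abs_mul]
          exact mul_le_mul (le_max_right _ _) (le_max_left _ _) (abs_nonneg _) hx0.le
    · rcases le_total |b| |a| with h1 | h1 <;> rcases le_total |d| |c| with h2 | h2
      · rw [max_eq_left h1, max_eq_left h2]
        exact bop_master a b c d h1 h2
          (abs_pos.1 (hx0.trans_le (max_le le_rfl h1)))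
          (abs_pos.1 (hy0.trans_le (max_le le_rfl h2)))
      · rw [max_eq_left h1, max_eq_right h2]
        have h := bop_master a b d (-c) h1 (by rwa [abs_neg])
          (abs_pos.1 (hx0.trans_le (max_le le_rfl h1)))
          (abs_pos.1 (hy0.trans_le (max_le h2 le_rfl)))
        simp only [mul_neg] at h
        rw [abs_bop_negneg] at h
        exact h.trans (le_of_eq (max_comm _ _))
      · rw [max_eq_right h1, max_eq_left h2]
        have h := bop_master b a c (-d) h1 (by rwa [abs_neg])
          (abs_pos.1 (hx0.trans_le (max_le h1 le_rfl)))
          (abs_pos.1 (hy0.trans_le (max_le le_rfl h2)))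
        simp only [mul_neg] at h
        rw [abs_bop_swap (a * d) (b * c), abs_bop_negneg, bop_comm (b * d) (a * c)] at h
        exact h.trans (le_of_eq (max_comm _ _))
      · rw [max_eq_right h1, max_eq_right h2]
        have h := bop_master b a d c h1 h2
          (abs_pos.1 (hx0.trans_le (max_le h1 le_rfl)))
          (abs_pos.1 (hy0.trans_le (max_le h2 le_rfl)))
        rw [bop_comm (b * d) (a * c), abs_bop_swap (a * d) (b * c)] at h
        exact h
  refine ⟨main, ?_⟩
  rw [abs_div, abs_div, abs_of_pos hNpos, max_div' _ _ _ hNpos, main,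
    div_self hNpos.ne']
end

section
/- Identify a complex number z = a + ib with the pair (a,b) ∈ ℝ², and define the product z ⊠ w := (ac ⊟ bd, ad ⊞ bc) for z = (a,b), w = (c,d), the conjugate z̄ := (a,−b), and the limit modulus |z|_∞ := max{|a|,|b|}. Then: (1) z ⊠ z̄ = (|z|_∞², 0), so √(z ⊠ z̄) = |z|_∞; and (2) for all z, w, |z ⊠ w|_∞ = |z|_∞ |w|_∞ (in particular, if |z|_∞ = |w|_∞ = 1 then |z ⊠ w|_∞ = 1). -/
open Filter Finset

/-- The limit complex product `z ⊠ w` on ℝ² ≃ ℂ. -/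
noncomputable def cmul (z w : ℝ × ℝ) : ℝ × ℝ :=
  (bop (z.1 * w.1) (-(z.2 * w.2)), bop (z.1 * w.2) (z.2 * w.1))

/-- Complex conjugation on ℝ² ≃ ℂ. -/
def cconj (z : ℝ × ℝ) : ℝ × ℝ := (z.1, -z.2)

/-- The limit modulus `|z|_∞ = max{|a|,|b|}`. -/
noncomputable def cmod (z : ℝ × ℝ) : ℝ := max |z.1| |z.2|

lemma bop_lt {x y : ℝ} (h : |y| < |x|) : bop x y = x := if_pos h

lemma bop_gt {x y : ℝ} (h : |x| < |y|) : bop x y = y := by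
  rw [bop, if_neg (not_lt.2 h.le), if_pos h]

lemma bop_mid {x y : ℝ} (h : |x| = |y|) : bop x y = (x + y) / 2 := by
  rw [bop, if_neg (by rw [h]; exact lt_irrefl _), if_neg (by rw [h]; exact lt_irrefl _)]

lemma half_abs_le {x y : ℝ} {M : ℝ} (hx : |x| ≤ M) (hy : |y| ≤ M) :
    |(x + y) / 2| ≤ M := by
  rw [abs_div, abs_two]
  have := abs_add_le x y
  linarith

set_option maxHeartbeats 1000000 in
lemma key (a b c d : ℝ) :
    max |bop (a*c) (-(b*d))| |bop (a*d) (b*c)| = max |a| |b| * max |c| |d| := by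
  have nA := abs_nonneg a; have nB := abs_nonneg b
  have nC := abs_nonneg c; have nD := abs_nonneg d
  have hR : max |a| |b| * max |c| |d|
      = max (max (|a| * |c|) (|b| * |c|)) (max (|a| * |d|) (|b| * |d|)) := by
    rw [mul_max_of_nonneg _ _ (le_max_of_le_left nA), max_mul_of_nonneg _ _ nC,
      max_mul_of_nonneg _ _ nD]
  rcases lt_trichotomy |b*d| |a*c| with h1 | h1 | h1 <;>
    rcases lt_trichotomy |a*d| |b*c| with h2 | h2 | h2
  -- Case 1: BD < AC, AD < BC
  · have h1' := h1; have h2' := h2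
    rw [abs_mul, abs_mul] at h1' h2'
    have hDC : |d| ≤ |c| := by nlinarith
    rw [bop_lt (by rwa [abs_neg]), bop_gt h2, abs_mul, abs_mul,
      max_eq_left hDC, max_mul_of_nonneg _ _ nC]
  -- Case 2: BD < AC, AD = BC
  · have h1' := h1; have h2' := h2
    rw [abs_mul, abs_mul] at h1' h2'
    have e : (|a| * |d|)^2 = (|a| * |c|) * (|b| * |d|) := by
      linear_combination (|a| * |d|) * h2'
    have hq : |a| * |d| < |a| * |c| := by
      nlinarith [e, mul_nonneg nA nC, mul_nonneg nA nD, mul_nonneg nB nD]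
    have h3 : |(a*d + b*c)/2| ≤ |a| * |d| :=
      half_abs_le (by rw [abs_mul]) (by rw [abs_mul]; exact h2'.ge)
    rw [bop_lt (by rwa [abs_neg]), bop_mid h2, abs_mul,
      max_eq_left (h3.trans hq.le), hR,
      max_eq_left (by linarith : |b| * |c| ≤ |a| * |c|),
      max_eq_left (max_le hq.le h1'.le)]
  -- Case 3: BD < AC, BC < AD
  · have h1' := h1; have h2' := h2
    rw [abs_mul, abs_mul] at h1' h2'
    have hBA : |b| ≤ |a| := by nlinarith
    rw [bop_lt (by rwa [abs_neg]), bop_lt h2, abs_mul, abs_mul,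
      max_eq_left hBA, mul_max_of_nonneg _ _ nA]
  -- Case 4: BD = AC, AD < BC
  · have h1' := h1; have h2' := h2
    rw [abs_mul, abs_mul] at h1' h2'
    have e : (|a| * |c|)^2 = (|a| * |d|) * (|b| * |c|) := by
      linear_combination (-(|a| * |c|)) * h1'
    have hp : |a| * |c| < |b| * |c| := by
      nlinarith [e, mul_nonneg nA nC, mul_nonneg nB nC, mul_nonneg nA nD]
    have h3 : |(a*c + -(b*d))/2| ≤ |a| * |c| :=
      half_abs_le (by rw [abs_mul]) (by rw [abs_neg, abs_mul]; exact h1'.le)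
    rw [bop_mid (by rw [abs_neg]; exact h1.symm), bop_gt h2, abs_mul,
      max_eq_right (h3.trans hp.le), hR,
      max_eq_right hp.le,
      max_eq_left (max_le (by linarith) (by linarith))]
  -- Case 5: BD = AC, AD = BC
  · have hs1 : (b*d)^2 = (a*c)^2 := by rw [← sq_abs (b*d), ← sq_abs (a*c), h1]
    have hs2 : (a*d)^2 = (b*c)^2 := by rw [← sq_abs (a*d), ← sq_abs (b*c), h2]
    have hf1 : (a^2 - b^2) * (c^2 + d^2) = 0 := by linear_combination (-1) * hs1 + hs2
    have hf2 : (a^2 + b^2) * (c^2 - d^2) = 0 := by linear_combination (-1) * hs1 - hs2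
    rcases mul_eq_zero.mp hf1 with hab | hcd0
    · rcases mul_eq_zero.mp hf2 with hab0 | hcd2
      · have ha : a = 0 := by nlinarith [sq_nonneg a, sq_nonneg b]
        have hb : b = 0 := by nlinarith [sq_nonneg a, sq_nonneg b]
        subst ha; subst hb; norm_num [bop]
      · have hAB : |a| = |b| := by
          have : |a|^2 = |b|^2 := by rw [sq_abs, sq_abs]; linarith
          exact (pow_left_inj₀ nA nB two_ne_zero).mp this
        have hCD : |c| = |d| := by
          have : |c|^2 = |d|^2 := by rw [sq_abs, sq_abs]; linarith
          exact (pow_left_inj₀ nC nD two_ne_zero).mp this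
        have hXY : (a*c + -(b*d)) * (a*d + b*c) = 0 := by
          linear_combination (c*d) * hab + (a*b) * hcd2
        have hRHS : max |a| |b| * max |c| |d| = |a| * |c| := by
          rw [← hAB, ← hCD, max_self, max_self]
        rcases mul_eq_zero.mp hXY with hX | hY
        · have hY2 : (a*d + b*c)^2 = (2*(|a| * |c|))^2 := by
            rw [mul_pow, mul_pow, sq_abs, sq_abs]
            linear_combination (-(c^2+d^2)) * hab + (-2*a^2) * hcd2 +
              (-(a*c + -(b*d))) * hX
          have hYabs : |a*d + b*c| = 2*(|a| * |c|) :=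
            (pow_left_inj₀ (abs_nonneg _) (by positivity) two_ne_zero).mp
              (by rw [sq_abs]; exact hY2)
          have hY' : |(a*d + b*c)/2| = |a| * |c| := by
            rw [abs_div, abs_two, hYabs]; ring
          rw [bop_mid (by rw [abs_neg]; exact h1.symm), bop_mid h2, hX, hY', hRHS]
          simp only [zero_div, abs_zero]
          exact max_eq_right (by positivity)
        · have hX2 : (a*c + -(b*d))^2 = (2*(|a| * |c|))^2 := by
            rw [mul_pow, mul_pow, sq_abs, sq_abs]
            linear_combination (-(c^2+d^2)) * hab + (-2*a^2) * hcd2 +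
              (-(a*d + b*c)) * hY
          have hXabs : |a*c + -(b*d)| = 2*(|a| * |c|) :=
            (pow_left_inj₀ (abs_nonneg _) (by positivity) two_ne_zero).mp
              (by rw [sq_abs]; exact hX2)
          have hX' : |(a*c + -(b*d))/2| = |a| * |c| := by
            rw [abs_div, abs_two, hXabs]; ring
          rw [bop_mid (by rw [abs_neg]; exact h1.symm), bop_mid h2, hY, hX', hRHS]
          simp only [zero_div, abs_zero]
          exact max_eq_left (by positivity)
    · have hc : c = 0 := by nlinarith [sq_nonneg c, sq_nonneg d]
      have hd : d = 0 := by nlinarith [sq_nonneg c, sq_nonneg d]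
      subst hc; subst hd; norm_num [bop]
  -- Case 6: BD = AC, BC < AD
  · have h1' := h1; have h2' := h2
    rw [abs_mul, abs_mul] at h1' h2'
    have e : (|a| * |c|)^2 = (|a| * |d|) * (|b| * |c|) := by
      linear_combination (-(|a| * |c|)) * h1'
    have hq : |a| * |c| < |a| * |d| := by
      nlinarith [e, mul_nonneg nA nC, mul_nonneg nA nD, mul_nonneg nB nC]
    have h3 : |(a*c + -(b*d))/2| ≤ |a| * |c| :=
      half_abs_le (by rw [abs_mul]) (by rw [abs_neg, abs_mul]; exact h1'.le)
    rw [bop_mid (by rw [abs_neg]; exact h1.symm), bop_lt h2, abs_mul,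
      max_eq_right (h3.trans hq.le), hR,
      max_eq_left (by linarith : |b| * |d| ≤ |a| * |d|),
      max_eq_right (max_le (by linarith) (by linarith))]
  -- Case 7: AC < BD, AD < BC
  · have h1' := h1; have h2' := h2
    rw [abs_mul, abs_mul] at h1' h2'
    have hAB : |a| ≤ |b| := by nlinarith
    rw [bop_gt (by rwa [abs_neg]), bop_gt h2, abs_neg, abs_mul, abs_mul,
      max_eq_right hAB, mul_max_of_nonneg _ _ nB]
    exact max_comm _ _
  -- Case 8: AC < BD, AD = BC
  · have h1' := h1; have h2' := h2
    rw [abs_mul, abs_mul] at h1' h2'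
    have e : (|a| * |d|)^2 = (|a| * |c|) * (|b| * |d|) := by
      linear_combination (|a| * |d|) * h2'
    have hq : |a| * |d| < |b| * |d| := by
      nlinarith [e, mul_nonneg nA nD, mul_nonneg nB nD, mul_nonneg nA nC]
    have h3 : |(a*d + b*c)/2| ≤ |a| * |d| :=
      half_abs_le (by rw [abs_mul]) (by rw [abs_mul]; exact h2'.ge)
    rw [bop_gt (by rwa [abs_neg]), bop_mid h2, abs_neg, abs_mul,
      max_eq_left (h3.trans hq.le), hR,
      max_eq_right hq.le,
      max_eq_right (max_le (by linarith) (by linarith))]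
  -- Case 9: AC < BD, BC < AD
  · have h1' := h1; have h2' := h2
    rw [abs_mul, abs_mul] at h1' h2'
    have hCD : |c| ≤ |d| := by nlinarith
    rw [bop_gt (by rwa [abs_neg]), bop_lt h2, abs_neg, abs_mul, abs_mul,
      max_eq_right hCD, max_mul_of_nonneg _ _ nD]
    exact max_comm _ _

lemma part1 (z : ℝ × ℝ) : cmul z (cconj z) = (cmod z ^ 2, 0) := by
  obtain ⟨a, b⟩ := z
  simp only [cmul, cconj, cmod, Prod.mk.injEq]
  constructor
  · have e1 : -(b * -b) = b * b := by ring
    rw [e1]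
    rcases lt_trichotomy |b| |a| with h | h | h
    · rw [bop_lt (by rw [abs_mul, abs_mul]; exact mul_self_lt_mul_self (abs_nonneg b) h),
        max_eq_left h.le, sq_abs, sq]
    · have hb2 : b * b = a * a := by
        have := congrArg (fun t => t * t) h
        simpa [abs_mul_abs_self] using this
      rw [bop_mid (by rw [abs_mul, abs_mul, h]), max_eq_left h.le, sq_abs, sq, hb2]
      ring
    · rw [bop_gt (by rw [abs_mul, abs_mul]; exact mul_self_lt_mul_self (abs_nonneg a) h),
        max_eq_right h.le, sq_abs, sq]
  · rw [bop_mid (by rw [abs_mul, abs_mul, abs_neg, mul_comm])]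
    ring

/-- properties of the limit complex product. -/
theorem stmt16 :
    (∀ z : ℝ × ℝ, cmul z (cconj z) = (cmod z ^ 2, 0) ∧
      Real.sqrt ((cmul z (cconj z)).1) = cmod z) ∧
    (∀ z w : ℝ × ℝ, cmod (cmul z w) = cmod z * cmod w) := by
  refine ⟨fun z => ⟨part1 z, ?_⟩, fun z w => ?_⟩
  · rw [part1 z]
    exact Real.sqrt_sq (le_max_of_le_left (abs_nonneg _))
  · obtain ⟨a, b⟩ := z; obtain ⟨c, d⟩ := w
    simpa [cmul, cmod] using key a b c d
end
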